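/- Exponential accuracy of the smoothed disk area: for every s > 0, 0 < ∫_{ℝ²} ½(1 + tanh(s(1 - x² - y²))) dx dy - π ≤ π·e^{-2s}/(2s). In particular, the integral tends to π as s → ∞. -/

import Mathlib

open Real MeasureTheory Filter Set Topology

private lemma tanh_form (t : ℝ) :
    (1 + Real.tanh t) / 2 = 1 / (1 + Real.exp (-2 * t)) := by
  rw [Real.tanh_eq_sinh_div_cosh, Real.sinh_eq, Real.cosh_eq]
  have h1 : (0:ℝ) < Real.exp t := Real.exp_pos t
  have h2 : (0:ℝ) < Real.exp (-t) := Real.exp_pos _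
  have h3 : Real.exp (-2 * t) = Real.exp (-t) * Real.exp (-t) := by
    rw [← Real.exp_add]; ring_nf
  have h4 : Real.exp t * Real.exp (-t) = 1 := by rw [← Real.exp_add]; simp
  rw [h3]
  have hc : Real.exp t + Real.exp (-t) ≠ 0 := by positivity
  field_simp
  nlinarith [h4]

private lemma integral_value {s : ℝ} (hs : 0 < s) :
    (∫ p : ℝ × ℝ, (1 + Real.tanh (s * (1 - p.1 ^ 2 - p.2 ^ 2))) / 2)
      = π + π * Real.log (1 + Real.exp (-2 * s)) / (2 * s) := by
  set g : ℝ → ℝ := fun u => 1 / (1 + Real.exp (2 * s * (u - 1))) with hgdef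
  have hgf : ∀ p : ℝ × ℝ, (1 + Real.tanh (s * (1 - p.1 ^ 2 - p.2 ^ 2))) / 2
      = g (p.1 ^ 2 + p.2 ^ 2) := by
    intro p
    rw [tanh_form]
    have : -2 * (s * (1 - p.1 ^ 2 - p.2 ^ 2)) = 2 * s * (p.1 ^ 2 + p.2 ^ 2 - 1) := by ring
    rw [this]
  simp_rw [hgf]
  rw [← integral_comp_polarCoord_symm (fun p => g (p.1 ^ 2 + p.2 ^ 2))]
  have hsimp : ∀ p : ℝ × ℝ,
      (polarCoord.symm p).1 ^ 2 + (polarCoord.symm p).2 ^ 2 = p.1 ^ 2 := by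
    intro p
    simp only [polarCoord_symm_apply]
    linear_combination (p.1 ^ 2) * (sin_sq_add_cos_sq p.2)
  simp_rw [hsimp, smul_eq_mul, polarCoord_target]
  have hprod : (∫ p in Ioi (0:ℝ) ×ˢ Ioo (-π) π, p.1 * g (p.1 ^ 2))
      = (∫ r in Ioi (0:ℝ), r * g (r ^ 2)) * ∫ _ in Ioo (-π) π, (1:ℝ) := by
    rw [Measure.volume_eq_prod, ← setIntegral_prod_mul (fun r => r * g (r ^ 2)) (fun _ => (1:ℝ))]
    simp
  rw [hprod]
  have hθ : (∫ _ in Ioo (-π) π, (1:ℝ)) = 2 * π := by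
    rw [setIntegral_const, measureReal_def, Real.volume_Ioo, smul_eq_mul, mul_one,
      ENNReal.toReal_ofReal (by linarith [pi_pos])]
    ring
  -- radial integral
  set H : ℝ → ℝ := fun r => (r ^ 2 - Real.log (1 + Real.exp (2 * s * (r ^ 2 - 1))) / (2 * s)) / 2
    with hHdef
  have hderiv : ∀ r : ℝ, HasDerivAt H (r * g (r ^ 2)) r := by
    intro r
    have h1 : HasDerivAt (fun r : ℝ => 2 * s * (r ^ 2 - 1)) (2 * s * (2 * r)) r := by
      simpa using (((hasDerivAt_pow 2 r).sub_const 1).const_mul (2 * s))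
    have h2 := h1.exp
    have h3 := h2.const_add 1
    have hpos : (0:ℝ) < 1 + Real.exp (2 * s * (r ^ 2 - 1)) := by positivity
    have h4 := h3.log hpos.ne'
    have h5 := ((hasDerivAt_pow 2 r).sub (h4.div_const (2 * s))).div_const 2
    convert h5 using 1
    · rfl
    · rfl
    · rfl
    simp only [hgdef, pow_one]
    field_simp
    ring
  have hkey : ∀ x : ℝ, H x = (1 - Real.log (1 + Real.exp (-(2 * s * (x ^ 2 - 1)))) / (2 * s)) / 2 := by
    intro x
    have he : (1:ℝ) + Real.exp (2 * s * (x ^ 2 - 1))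
        = Real.exp (2 * s * (x ^ 2 - 1)) * (1 + Real.exp (-(2 * s * (x ^ 2 - 1)))) := by
      rw [mul_add, mul_one, ← Real.exp_add]
      simp [add_comm]
    simp only [hHdef]
    rw [he, Real.log_mul (Real.exp_ne_zero _) (by positivity), Real.log_exp]
    field_simp
    ring
  have htend : Tendsto H atTop (𝓝 (1 / 2)) := by
    have t1 : Tendsto (fun r : ℝ => r ^ 2) atTop atTop := tendsto_pow_atTop two_ne_zero
    have t2 : Tendsto (fun r : ℝ => 2 * s * (r ^ 2 - 1)) atTop atTop := by
      apply Tendsto.const_mul_atTop (by linarith : (0:ℝ) < 2 * s)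
      exact tendsto_atTop_add_const_right _ (-1) t1
    have t3 : Tendsto (fun r : ℝ => Real.exp (-(2 * s * (r ^ 2 - 1)))) atTop (𝓝 0) :=
      Real.tendsto_exp_atBot.comp (tendsto_neg_atTop_atBot.comp t2)
    have t4 : Tendsto (fun r : ℝ => Real.log (1 + Real.exp (-(2 * s * (r ^ 2 - 1))))) atTop
        (𝓝 0) := by
      have : Tendsto (fun r : ℝ => 1 + Real.exp (-(2 * s * (r ^ 2 - 1)))) atTop (𝓝 1) := by
        simpa using (tendsto_const_nhds.add t3)
      have hlog := (Real.continuousAt_log (by norm_num : (1:ℝ) ≠ 0)).tendsto.comp this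
      simpa [Function.comp_def] using hlog
    have t5 : Tendsto
        (fun x : ℝ => (1 - Real.log (1 + Real.exp (-(2 * s * (x ^ 2 - 1)))) / (2 * s)) / 2)
        atTop (𝓝 ((1 - 0 / (2 * s)) / 2)) :=
      (tendsto_const_nhds.sub (t4.div_const (2 * s))).div_const 2
    simp only [zero_div, sub_zero] at t5
    have heq : H = fun x => (1 - Real.log (1 + Real.exp (-(2 * s * (x ^ 2 - 1)))) / (2 * s)) / 2 :=
      funext hkey
    rw [heq]
    exact t5
  have hnonneg : ∀ x ∈ Ioi (0:ℝ), 0 ≤ x * g (x ^ 2) := by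
    intro x hx
    have : (0:ℝ) < 1 + Real.exp (2 * s * (x ^ 2 - 1)) := by positivity
    have hg0 : 0 ≤ g (x ^ 2) := by simp only [hgdef]; positivity
    exact mul_nonneg (le_of_lt hx) hg0
  have hrad : (∫ r in Ioi (0:ℝ), r * g (r ^ 2)) = 1 / 2 - H 0 :=
    integral_Ioi_of_hasDerivAt_of_nonneg' (fun x _ => hderiv x) hnonneg htend
  have hH0 : H 0 = -(Real.log (1 + Real.exp (-2 * s)) / (4 * s)) := by
    have h0 : 2 * s * ((0:ℝ) ^ 2 - 1) = -2 * s := by ring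
    simp only [hHdef, h0]
    ring
  rw [hrad, hH0, hθ]
  field_simp
  ring

/-- **Exponential accuracy of the smoothed disk area.** For every slope `s > 0` the integral
of the smoothed indicator of the unit disk exceeds `π` by at most `π e^{-2s}/(2s)`;
in particular the integral tends to `π` as `s → ∞`. -/
theorem smoothed_disk_area_exponential_accuracy :
    (∀ s : ℝ, 0 < s →
      0 < (∫ p : ℝ × ℝ, (1 + Real.tanh (s * (1 - p.1 ^ 2 - p.2 ^ 2))) / 2) - π ∧
      (∫ p : ℝ × ℝ, (1 + Real.tanh (s * (1 - p.1 ^ 2 - p.2 ^ 2))) / 2) - π ≤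
        π * Real.exp (-2 * s) / (2 * s)) ∧
    Tendsto (fun s : ℝ => ∫ p : ℝ × ℝ, (1 + Real.tanh (s * (1 - p.1 ^ 2 - p.2 ^ 2))) / 2)
      atTop (nhds π) := by
  constructor
  · intro s hs
    rw [integral_value hs]
    have hL : 0 < Real.log (1 + Real.exp (-2 * s)) :=
      Real.log_pos (by linarith [Real.exp_pos (-2 * s)])
    have hLe : Real.log (1 + Real.exp (-2 * s)) ≤ Real.exp (-2 * s) := by
      have := Real.log_le_sub_one_of_pos
        (show (0:ℝ) < 1 + Real.exp (-2 * s) by positivity)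
      linarith
    have h1 : π + π * Real.log (1 + Real.exp (-2 * s)) / (2 * s) - π
        = π * Real.log (1 + Real.exp (-2 * s)) / (2 * s) := by ring
    rw [h1]
    constructor
    · positivity
    · gcongr
  · have heq : (fun s : ℝ => π + π * Real.log (1 + Real.exp (-2 * s)) / (2 * s))
        =ᶠ[atTop] fun s : ℝ => ∫ p : ℝ × ℝ, (1 + Real.tanh (s * (1 - p.1 ^ 2 - p.2 ^ 2))) / 2 := by
      filter_upwards [eventually_gt_atTop 0] with s hs
      exact (integral_value hs).symm
    apply Tendsto.congr' heq
    have t1 : Tendsto (fun s : ℝ => -2 * s) atTop atBot :=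
      (tendsto_const_mul_atBot_of_neg (by norm_num : (-2:ℝ) < 0)).2 tendsto_id
    have t0 : Tendsto (fun s : ℝ => Real.exp (-2 * s)) atTop (𝓝 0) :=
      Real.tendsto_exp_atBot.comp t1
    have tlog : Tendsto (fun s : ℝ => Real.log (1 + Real.exp (-2 * s))) atTop (𝓝 0) := by
      have h1 : Tendsto (fun s : ℝ => 1 + Real.exp (-2 * s)) atTop (𝓝 1) := by
        simpa using tendsto_const_nhds.add t0
      simpa [Function.comp_def] using (Real.continuousAt_log (by norm_num : (1:ℝ) ≠ 0)).tendsto.comp h1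
    have tinv : Tendsto (fun s : ℝ => (2 * s)⁻¹) atTop (𝓝 0) :=
      tendsto_inv_atTop_zero.comp (Tendsto.const_mul_atTop two_pos tendsto_id)
    have tmain : Tendsto (fun s : ℝ => π + π * Real.log (1 + Real.exp (-2 * s)) / (2 * s))
        atTop (𝓝 (π + π * 0 * 0)) := by
      simp_rw [div_eq_mul_inv]
      exact tendsto_const_nhds.add ((tendsto_const_nhds.mul tlog).mul tinv)
    simpa using tmain
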